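/- Let Ġ be a connected unbalanced C₃⁻-free signed graph on n vertices. Then every vertex v of Ġ has degree at most n − 2. -/

import Mathlib

/-- The sign of a walk in a signed graph: the product of the signs of its edges. -/
def walkSign {V : Type*} {G : SimpleGraph V} (σ : V → V → ℤ) {x y : V} (p : G.Walk x y) : ℤ :=
  (p.darts.map fun d => σ d.toProd.1 d.toProd.2).prod

/-- A signed graph is balanced when every cycle has sign `+1`. -/
def SignedBalanced {V : Type*} (G : SimpleGraph V) (σ : V → V → ℤ) : Prop :=
  ∀ (x : V) (c : G.Walk x x), c.IsCycle → walkSign σ c = 1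

lemma walkSign_of_potential {V : Type*} {G : SimpleGraph V} (σ : V → V → ℤ) (τ : V → ℤ)
    (hτ : ∀ x, τ x * τ x = 1)
    (hστ : ∀ a b, G.Adj a b → σ a b = τ a * τ b) :
    ∀ {x y : V} (p : G.Walk x y), walkSign σ p = τ x * τ y := by
  intro x y p
  induction p with
  | nil => exact (hτ _).symm
  | cons h q ih =>
    simp only [walkSign, SimpleGraph.Walk.darts_cons, List.map_cons, List.prod_cons] at ih ⊢
    rename_i u w
    rename_i a
    rw [hστ _ _ h, ih]
    linear_combination (τ a * τ w) * hτ u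

/-!
STATEMENT 17: Let Ġ be a connected unbalanced C₃⁻-free signed graph on n vertices.
Then every vertex v of Ġ has degree at most n − 2.
-/
theorem degree_le_of_unbalanced_C3minus_free {V : Type*} [Fintype V] [DecidableEq V]
    (n : ℕ) (hn : Fintype.card V = n)
    (G : SimpleGraph V) [DecidableRel G.Adj] (σ : V → V → ℤ)
    (hsymm : ∀ x y, σ x y = σ y x)
    (hval : ∀ x y, G.Adj x y → σ x y = 1 ∨ σ x y = -1)
    (hzero : ∀ x y, ¬ G.Adj x y → σ x y = 0)
    (hconn : G.Connected)
    (hunbal : ¬ SignedBalanced G σ)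
    (hfree : ∀ a b c, G.Adj a b → G.Adj b c → G.Adj a c → σ a b * σ b c * σ a c ≠ -1) :
    ∀ v : V, G.degree v ≤ n - 2 := by
  intro v
  by_contra hd
  push_neg at hd
  have hlt : G.degree v < Fintype.card V := G.degree_lt_card_verts v
  rw [hn] at hlt
  have hdeg : G.degree v = n - 1 := by omega
  -- the neighbor finset equals univ.erase v
  have hsub : G.neighborFinset v ⊆ Finset.univ.erase v := by
    intro w hw
    rw [SimpleGraph.mem_neighborFinset] at hw
    exact Finset.mem_erase.2 ⟨hw.ne', Finset.mem_univ w⟩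
  have hcard : (Finset.univ.erase v).card ≤ (G.neighborFinset v).card := by
    rw [Finset.card_erase_of_mem (Finset.mem_univ v), Finset.card_univ, hn,
      SimpleGraph.card_neighborFinset_eq_degree, hdeg]
  have heq := Finset.eq_of_subset_of_card_le hsub hcard
  have hadj : ∀ w, w ≠ v → G.Adj v w := by
    intro w hw
    have : w ∈ G.neighborFinset v := by
      rw [heq]; exact Finset.mem_erase.2 ⟨hw, Finset.mem_univ w⟩
    rwa [SimpleGraph.mem_neighborFinset] at this
  -- potential function
  set τ : V → ℤ := fun x => if x = v then 1 else σ v x with hτdef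
  have hτ : ∀ x, τ x * τ x = 1 := by
    intro x
    by_cases hx : x = v
    · simp [hτdef, hx]
    · have := hval v x (hadj x hx)
      simp only [hτdef, if_neg hx]
      rcases this with h | h <;> rw [h] <;> norm_num
  have hστ : ∀ a b, G.Adj a b → σ a b = τ a * τ b := by
    intro a b hab
    by_cases ha : a = v
    · have hb : b ≠ v := by rw [← ha]; exact hab.ne'
      simp only [hτdef, if_pos ha, if_neg hb, one_mul]
      rw [ha]
    · by_cases hb : b = v
      · simp only [hτdef, if_neg ha, if_pos hb, mul_one]
        rw [hb]; exact hsymm a v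
      · have h1 := hval v a (hadj a ha)
        have h2 := hval v b (hadj b hb)
        have h3 := hval a b hab
        have hf := hfree v a b (hadj a ha) hab (hadj b hb)
        simp only [hτdef, if_neg ha, if_neg hb]
        rcases h1 with h1 | h1 <;> rcases h2 with h2 | h2 <;> rcases h3 with h3 | h3 <;>
          rw [h1, h2, h3] at hf ⊢ <;> omega
  exact hunbal fun x c hc => by rw [walkSign_of_potential σ τ hτ hστ c]; exact hτ x
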